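/- Let y : V → ℝ^n be a twice continuously differentiable solution on a neighborhood V ⊆ U of 0 of the linear system ∂y_r/∂x_u + Σ_{s=1}^n f_{rsu} y_s = 0 (for all 1 ≤ r ≤ n, 1 ≤ u ≤ k). Then for all 1 ≤ t ≤ n, 1 ≤ u, v ≤ k and all x ∈ V, one has Σ_{s=1}^n R_{tsuv}(x) y_s(x) = 0. -/

import Mathlib

/-- If `y` is a twice continuously differentiable solution of the linear system
`∂y_r/∂x_u + ∑_s f_{rsu} y_s = 0` on a neighborhood `V ⊆ U` of `0`, then
`∑_s R_{tsuv}(x) y_s(x) = 0` on `V`, where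
`R_{tsuv} = ∂f_{tsv}/∂x_u − ∂f_{tsu}/∂x_v + ∑_p f_{tpu} f_{psv} − ∑_p f_{tpv} f_{psu}`. -/
theorem stmt_1 (n k : ℕ) (hn : 1 ≤ n) (hk : 1 ≤ k)
    (U : Set (Fin k → ℝ)) (hUopen : IsOpen U) (hU0 : (0 : Fin k → ℝ) ∈ U)
    (f : Fin n → Fin n → Fin k → (Fin k → ℝ) → ℝ)
    (hf : ∀ r s u, AnalyticOnNhd ℝ (f r s u) U)
    (V : Set (Fin k → ℝ)) (hVopen : IsOpen V) (hV0 : (0 : Fin k → ℝ) ∈ V) (hVU : V ⊆ U)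
    (y : (Fin k → ℝ) → Fin n → ℝ) (hy : ContDiffOn ℝ 2 y V)
    (hsys : ∀ x ∈ V, ∀ (r : Fin n) (u : Fin k),
      fderiv ℝ (fun z => y z r) x (Pi.single u 1) + ∑ s, f r s u x * y x s = 0) :
    ∀ x ∈ V, ∀ (t : Fin n) (u v : Fin k),
      ∑ s, (fderiv ℝ (f t s v) x (Pi.single u 1) - fderiv ℝ (f t s u) x (Pi.single v 1)
        + ∑ p, f t p u x * f p s v x - ∑ p, f t p v x * f p s u x) * y x s = 0 := by
  intro x hx t u v
  set e : Fin k → (Fin k → ℝ) := fun w => Pi.single w 1 with he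
  -- components of y are C² at points of V
  have hg : ∀ (r : Fin n), ∀ z ∈ V, ContDiffAt ℝ 2 (fun w => y w r) z := by
    intro r z hz
    have h1 : ContDiffAt ℝ 2 y z := (hy z hz).contDiffAt (hVopen.mem_nhds hz)
    exact ((ContinuousLinearMap.proj r : (Fin n → ℝ) →L[ℝ] ℝ).contDiff.comp_contDiffAt z h1)
  have hgd : ∀ (r : Fin n), ∀ z ∈ V, DifferentiableAt ℝ (fun w => y w r) z := fun r z hz =>
    (hg r z hz).differentiableAt two_ne_zero
  -- value of first derivatives from the system
  have hgs : ∀ (s : Fin n) (w : Fin k),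
      fderiv ℝ (fun z => y z s) x (e w) = -∑ p, f s p w x * y x p := by
    intro s w
    have := hsys x hx s w
    linarith
  -- the second-derivative computation
  have key : ∀ u v : Fin k,
      fderiv ℝ (fderiv ℝ (fun w => y w t)) x (e u) (e v)
        = -∑ s, (f t s v x * (fderiv ℝ (fun z => y z s) x (e u))
            + y x s * fderiv ℝ (f t s v) x (e u)) := by
    intro u v
    have hc : DifferentiableAt ℝ (fderiv ℝ (fun w => y w t)) x :=
      ((hg t x hx).fderiv_right (m := 1) le_rfl).differentiableAt one_ne_zero
    have h1 : HasFDerivAt (fun z => fderiv ℝ (fun w => y w t) z (e v))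
        ((fderiv ℝ (fderiv ℝ (fun w => y w t)) x).flip (e v)) x := by
      have := hc.hasFDerivAt.clm_apply (hasFDerivAt_const (e v) x)
      simpa using this
    have h2 : HasFDerivAt (fun z => -∑ s, f t s v z * y z s)
        (-∑ s, (f t s v x • fderiv ℝ (fun z => y z s) x
            + y x s • fderiv ℝ (f t s v) x)) x := by
      apply HasFDerivAt.neg
      apply HasFDerivAt.fun_sum
      intro s _
      exact ((hf t s v x (hVU hx)).differentiableAt.hasFDerivAt).mul
        ((hgd s x hx).hasFDerivAt)
    have hequ : (fun z => fderiv ℝ (fun w => y w t) z (e v))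
        =ᶠ[nhds x] (fun z => -∑ s, f t s v z * y z s) := by
      filter_upwards [hVopen.mem_nhds hx] with z hz
      have := hsys z hz t v
      linarith
    have h3 : HasFDerivAt (fun z => fderiv ℝ (fun w => y w t) z (e v))
        (-∑ s, (f t s v x • fderiv ℝ (fun z => y z s) x
            + y x s • fderiv ℝ (f t s v) x)) x :=
      h2.congr_of_eventuallyEq hequ
    have h4 := h1.unique h3
    have h5 := congrArg (fun (L : (Fin k → ℝ) →L[ℝ] ℝ) => L (e u)) h4
    simpa using h5
  have symm : fderiv ℝ (fderiv ℝ (fun w => y w t)) x (e u) (e v)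
      = fderiv ℝ (fderiv ℝ (fun w => y w t)) x (e v) (e u) :=
    ((hg t x hx).isSymmSndFDerivAt (by norm_num)) (e u) (e v)
  have kuv := key u v
  have kvu := key v u
  rw [symm] at kuv
  -- substitute first derivatives
  simp only [hgs] at kuv kvu
  have main := kuv.symm.trans kvu
  -- now pure algebra with finite sums
  have hD : ∑ s, f t s v x * ∑ p, f s p u x * y x p
      = ∑ s, (∑ p, f t p v x * f p s u x) * y x s := by
    simp_rw [Finset.mul_sum, Finset.sum_mul]
    rw [Finset.sum_comm]
    exact Finset.sum_congr rfl fun s _ => Finset.sum_congr rfl fun p _ => by ring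
  have hC : ∑ s, f t s u x * ∑ p, f s p v x * y x p
      = ∑ s, (∑ p, f t p u x * f p s v x) * y x s := by
    simp_rw [Finset.mul_sum, Finset.sum_mul]
    rw [Finset.sum_comm]
    exact Finset.sum_congr rfl fun s _ => Finset.sum_congr rfl fun p _ => by ring
  have hA : ∑ s, fderiv ℝ (f t s v) x (e u) * y x s
      = ∑ s, y x s * fderiv ℝ (f t s v) x (e u) :=
    Finset.sum_congr rfl fun s _ => by ring
  have hB : ∑ s, fderiv ℝ (f t s u) x (e v) * y x s
      = ∑ s, y x s * fderiv ℝ (f t s u) x (e v) :=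
    Finset.sum_congr rfl fun s _ => by ring
  have main' : ∑ s, f t s v x * ∑ p, f s p u x * y x p
        - ∑ s, y x s * fderiv ℝ (f t s v) x (e u)
      = ∑ s, f t s u x * ∑ p, f s p v x * y x p
        - ∑ s, y x s * fderiv ℝ (f t s u) x (e v) := by
    simp only [mul_neg, Finset.sum_add_distrib, Finset.sum_neg_distrib, neg_add_rev,
      neg_neg] at main
    linarith
  simp only [sub_mul, add_mul, Finset.sum_sub_distrib, Finset.sum_add_distrib]
  linarith [main', hA, hB, hC, hD]
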